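/- The operation * on points is associative: for all points x, y, z one has (x*y)*z = x*(y*z). (This is the associativity part of Theorem 1: the root-monoid comultiplication defines an associative multiplication on the toric variety X_σ.) -/

import Mathlib

set_option maxRecDepth 10000

open Finset

def pairZ {n : ℕ} (v u : Fin n → ℤ) : ℤ := ∑ i, v i * u i

def InS {n m : ℕ} (q : Fin m → Fin n → ℤ) (u : Fin n → ℤ) : Prop :=
  ∀ j, 0 ≤ pairZ (q j) u

def IsPoint {n m : ℕ} {K : Type*} [Field K] (q : Fin m → Fin n → ℤ)
    (x : (Fin n → ℤ) → K) : Prop :=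
  x 0 = 1 ∧ ∀ u v : Fin n → ℤ, InS q u → InS q v → x (u + v) = x u * x v

def Compatible {n m k : ℕ} (hkm : k ≤ m) (q : Fin m → Fin n → ℤ)
    (e : Fin k → Fin n → ℤ) : Prop :=
  (∀ r s : Fin k, pairZ (q (Fin.castLE hkm s)) (e r) = if r = s then -1 else 0) ∧
  (∀ (r : Fin k) (j : Fin m), k ≤ (j : ℕ) → 0 ≤ pairZ (q j) (e r))

noncomputable def rmul {n m k : ℕ} {K : Type*} [Field K] (hkm : k ≤ m)
    (q : Fin m → Fin n → ℤ) (e1 e2 : Fin k → Fin n → ℤ)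
    (x y : (Fin n → ℤ) → K) : (Fin n → ℤ) → K :=
  fun u =>
    ∑ i ∈ Fintype.piFinset (fun r : Fin k =>
        Finset.range ((pairZ (q (Fin.castLE hkm r)) u).toNat + 1)),
      (∏ r : Fin k, ((pairZ (q (Fin.castLE hkm r)) u).toNat.choose (i r) : K)) *
        x (u + ∑ r : Fin k, (i r : ℤ) • e2 r) *
        y (u + ∑ r : Fin k, (pairZ (q (Fin.castLE hkm r)) u - (i r : ℤ)) • e1 r)

noncomputable def xtau {n m k : ℕ} (K : Type*) [Field K] (hkm : k ≤ m)
    (q : Fin m → Fin n → ℤ) : (Fin n → ℤ) → K :=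
  fun u => if ∀ r : Fin k, pairZ (q (Fin.castLE hkm r)) u = 0 then 1 else 0

lemma pairZ_add {n : ℕ} (v u w : Fin n → ℤ) : pairZ v (u + w) = pairZ v u + pairZ v w := by
  simp [pairZ, mul_add, Finset.sum_add_distrib]

lemma pairZ_sum {n : ℕ} (v : Fin n → ℤ) {ι : Type*} (s : Finset ι) (f : ι → Fin n → ℤ) :
    pairZ v (∑ t ∈ s, f t) = ∑ t ∈ s, pairZ v (f t) := by
  simp only [pairZ, Finset.sum_apply, Finset.mul_sum]
  exact Finset.sum_comm

lemma pairZ_smul {n : ℕ} (v : Fin n → ℤ) (c : ℤ) (w : Fin n → ℤ) :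
    pairZ v (c • w) = c * pairZ v w := by
  simp [pairZ, Finset.mul_sum, mul_left_comm]

lemma pairZ_shift {n m k : ℕ} (hkm : k ≤ m) (q : Fin m → Fin n → ℤ)
    (e : Fin k → Fin n → ℤ) (he : Compatible hkm q e) (u : Fin n → ℤ)
    (c : Fin k → ℤ) (s : Fin k) :
    pairZ (q (Fin.castLE hkm s)) (u + ∑ r, c r • e r)
      = pairZ (q (Fin.castLE hkm s)) u - c s := by
  rw [pairZ_add, pairZ_sum]
  simp only [pairZ_smul]
  have : ∀ r : Fin k, c r * pairZ (q (Fin.castLE hkm s)) (e r)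
      = if r = s then -c r else 0 := by
    intro r; rw [he.1 r s]; split <;> ring
  rw [Finset.sum_congr rfl fun r _ => this r, Finset.sum_ite_eq' Finset.univ s fun r => -c r]
  simp; ring

theorem statement_2 {n m k : ℕ} {K : Type*} [Field K] [CharZero K]
    (hn : 1 ≤ n) (hk : 1 ≤ k) (hkm : k ≤ m)
    (q : Fin m → Fin n → ℤ) (e1 e2 : Fin k → Fin n → ℤ)
    (he1 : Compatible hkm q e1) (he2 : Compatible hkm q e2)
    (x y z : (Fin n → ℤ) → K) (hx : IsPoint q x) (hy : IsPoint q y) (hz : IsPoint q z) :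
    ∀ u : Fin n → ℤ, InS q u →
      rmul hkm q e1 e2 (rmul hkm q e1 e2 x y) z u
        = rmul hkm q e1 e2 x (rmul hkm q e1 e2 y z) u := by
  intro u hu
  classical
  obtain ⟨a, ha⟩ : ∃ a : Fin k → ℕ, ∀ r, pairZ (q (Fin.castLE hkm r)) u = (a r : ℤ) :=
    ⟨fun r => (pairZ (q (Fin.castLE hkm r)) u).toNat,
     fun r => (Int.toNat_of_nonneg (hu _)).symm⟩
  simp only [rmul, pairZ_shift hkm q e2 he2 u, pairZ_shift hkm q e1 he1 u, ha,
    Int.toNat_natCast, sub_sub_cancel, Int.toNat_sub]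
  simp only [Finset.mul_sum, Finset.sum_mul]
  rw [Finset.sum_sigma', Finset.sum_sigma']
  refine Finset.sum_nbij' (fun p => ⟨fun r => p.1 r + p.2 r, p.1⟩)
    (fun p => ⟨p.2, fun r => p.1 r - p.2 r⟩) ?_ ?_ ?_ ?_ ?_
  · intro p hp
    simp only [Finset.mem_sigma, Fintype.mem_piFinset, Finset.mem_range] at hp ⊢
    exact ⟨fun r => by have h1 := hp.1 r; have h2 := hp.2 r; omega,
           fun r => by omega⟩
  · intro p hp
    simp only [Finset.mem_sigma, Fintype.mem_piFinset, Finset.mem_range] at hp ⊢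
    exact ⟨fun r => by have h1 := hp.1 r; have h2 := hp.2 r; omega,
           fun r => by have h1 := hp.1 r; have h2 := hp.2 r; omega⟩
  · intro p hp
    rcases p with ⟨p1, p2⟩
    dsimp only
    exact congrArg (Sigma.mk p1) (funext fun r => by omega)
  · intro p hp
    rcases p with ⟨p1, p2⟩
    simp only [Finset.mem_sigma, Fintype.mem_piFinset, Finset.mem_range] at hp
    dsimp only
    rw [show (fun r => p2 r + (p1 r - p2 r)) = p1 from
      funext fun r => by have := hp.2 r; omega]
  · intro p hp
    rcases p with ⟨i, j⟩
    simp only [Finset.mem_sigma, Fintype.mem_piFinset, Finset.mem_range] at hp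
    have hile : ∀ r, i r ≤ a r := fun r => by have := hp.1 r; omega
    have hij : ∀ r, i r + j r ≤ a r := fun r => by
      have h1 := hp.1 r; have h2 := hp.2 r; omega
    dsimp only
    have hA1 : u + ∑ r : Fin k, ((i r : ℤ)) • e2 r + ∑ r : Fin k, ((j r : ℤ)) • e2 r
        = u + ∑ r : Fin k, ((i r + j r : ℕ) : ℤ) • e2 r := by
      rw [add_assoc, ← Finset.sum_add_distrib]
      congr 1
      apply Finset.sum_congr rfl
      intro r _
      rw [← add_smul, show ((i r : ℤ) + (j r : ℤ)) = ((i r + j r : ℕ) : ℤ) by push_cast; ring]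
    have hs1 : (∑ r : Fin k, ((a r : ℤ) - (i r : ℤ) - (j r : ℤ)) • e1 r)
        = ∑ r : Fin k, ((a r : ℤ) - ((i r + j r : ℕ) : ℤ)) • e1 r := by
      apply Finset.sum_congr rfl
      intro r _
      rw [show ((a r : ℤ) - ((i r + j r : ℕ) : ℤ)) = (a r : ℤ) - (i r : ℤ) - (j r : ℤ)
        by push_cast; ring]
    have hA2 : u + ∑ r : Fin k, ((i r : ℤ)) • e2 r
          + ∑ r : Fin k, ((a r : ℤ) - (i r : ℤ) - (j r : ℤ)) • e1 r
        = u + ∑ r : Fin k, ((a r : ℤ) - ((i r + j r : ℕ) : ℤ)) • e1 r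
          + ∑ r : Fin k, ((i r : ℤ)) • e2 r := by
      rw [hs1, add_right_comm]
    have hA3 : u + ∑ r : Fin k, ((a r : ℤ) - (i r : ℤ)) • e1 r
        = u + ∑ r : Fin k, ((a r : ℤ) - ((i r + j r : ℕ) : ℤ)) • e1 r
          + ∑ r : Fin k, (((i r + j r : ℕ) : ℤ) - (i r : ℤ)) • e1 r := by
      rw [add_assoc, ← Finset.sum_add_distrib]
      congr 1
      apply Finset.sum_congr rfl
      intro r _
      rw [← add_smul, show ((a r : ℤ) - ((i r + j r : ℕ) : ℤ)) + (((i r + j r : ℕ) : ℤ)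
        - (i r : ℤ)) = (a r : ℤ) - (i r : ℤ) by push_cast; ring]
    have hco : (∏ r : Fin k, ((a r).choose (i r) : K))
          * (∏ r : Fin k, ((a r - i r).choose (j r) : K))
        = (∏ r : Fin k, ((a r).choose (i r + j r) : K))
          * (∏ r : Fin k, (((i r + j r).choose (i r)) : K)) := by
      rw [← Finset.prod_mul_distrib, ← Finset.prod_mul_distrib]
      apply Finset.prod_congr rfl
      intro r _
      have h2 : (a r).choose (i r + j r) * ((i r + j r).choose (i r))
          = (a r).choose (i r) * ((a r - i r).choose (j r)) := by
        rw [Nat.choose_mul (Nat.le_add_right _ _), Nat.add_sub_cancel_left]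
      exact_mod_cast congrArg (Nat.cast : ℕ → K) h2.symm
    rw [hA1, hA2, hA3]
    linear_combination
      (x (u + ∑ r : Fin k, ((i r + j r : ℕ) : ℤ) • e2 r) *
       y (u + ∑ r : Fin k, ((a r : ℤ) - ((i r + j r : ℕ) : ℤ)) • e1 r
            + ∑ r : Fin k, ((i r : ℤ)) • e2 r) *
       z (u + ∑ r : Fin k, ((a r : ℤ) - ((i r + j r : ℕ) : ℤ)) • e1 r
            + ∑ r : Fin k, (((i r + j r : ℕ) : ℤ) - (i r : ℤ)) • e1 r)) * hco
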